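/- Let {π^i_j : B_i → B_{ij}} be a family of surjective algebra homomorphisms satisfying: for all distinct i,j,k and all compatible pairs (b_i, b_j) with π^i_j(b_i) = π^j_i(b_j), there exists b_k ∈ B_k compatible with both. Then the cocycle identity φ^{ik}_j = φ^{ij}_k ∘ φ^{jk}_i holds for all distinct i,j,k. -/
import Mathlib


open Function

/-- A set of ideals *generates a distributive lattice* iff it is contained in a
distributive sublattice of the lattice of ideals. -/
def GeneratesDistribLattice {A : Type*} [CommRing A] (s : Set (Ideal A)) : Prop :=
  ∃ L : Sublattice (Ideal A), (∀ I ∈ s, I ∈ L) ∧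
    ∀ x ∈ L, ∀ y ∈ L, ∀ z ∈ L, x ⊓ (y ⊔ z) = (x ⊓ y) ⊔ (x ⊓ z)

variable {J : Type*}

/-- Compatibility of `b i` and `b j`: `π^i_j (b i) = π^j_i (b j)`, where the
identification `B_{ij} = B_{ji}` is witnessed by the ring isomorphisms `e`. -/
def Compat (B : J → Type*) [∀ i, CommRing (B i)] (C : J → J → Type*)
    [∀ i j, CommRing (C i j)] (π : ∀ i j, B i →+* C i j)
    (e : ∀ i j, C i j ≃+* C j i) (i j : J) (bi : B i) (bj : B j) : Prop :=
  π i j bi = e j i (π j i bj)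

/-- A *distributive family*: all the homomorphisms `π^i_j` are surjective and, for each
`i`, the kernels `ker π^i_j` generate a distributive lattice of ideals of `B i`. -/
def DistribFamily (B : J → Type*) [∀ i, CommRing (B i)] (C : J → J → Type*)
    [∀ i j, CommRing (C i j)] (π : ∀ i j, B i →+* C i j) : Prop :=
  (∀ i j, i ≠ j → Surjective (π i j)) ∧
  ∀ i : J, GeneratesDistribLattice {I : Ideal (B i) | ∃ j, j ≠ i ∧ I = RingHom.ker (π i j)}

/-- The first cocycle condition: `π^i_j (ker π^i_k) = π^j_i (ker π^j_k)` for all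
distinct `i, j, k` (the right-hand side is transported to `C i j` by `e`). -/
def Cocycle1 (B : J → Type*) [∀ i, CommRing (B i)] (C : J → J → Type*)
    [∀ i j, CommRing (C i j)] (π : ∀ i j, B i →+* C i j)
    (e : ∀ i j, C i j ≃+* C j i) : Prop :=
  ∀ i j k : J, i ≠ j → i ≠ k → j ≠ k →
    Ideal.map (π i j) (RingHom.ker (π i k)) =
      Ideal.map ((e j i).toRingHom.comp (π j i)) (RingHom.ker (π j k))

/-- The second cocycle condition `φ^{ik}_j = φ^{ij}_k ∘ φ^{jk}_i`, expressed elementwise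
via the characterization
`φ^{ij}_k ([b_j]^j_{ik}) = [b_i]^i_{jk} ↔ π^i_j(b_i) - π^j_i(b_j) ∈ π^i_j(ker π^i_k)`. -/
def Cocycle2 (B : J → Type*) [∀ i, CommRing (B i)] (C : J → J → Type*)
    [∀ i j, CommRing (C i j)] (π : ∀ i j, B i →+* C i j)
    (e : ∀ i j, C i j ≃+* C j i) : Prop :=
  ∀ i j k : J, i ≠ j → i ≠ k → j ≠ k → ∀ (bi : B i) (bj : B j) (bk : B k),
    π j k bj - e k j (π k j bk) ∈ Ideal.map (π j k) (RingHom.ker (π j i)) →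
    π i j bi - e j i (π j i bj) ∈ Ideal.map (π i j) (RingHom.ker (π i k)) →
    π i k bi - e k i (π k i bk) ∈ Ideal.map (π i k) (RingHom.ker (π i j))

/-- The cocycle condition of Calow–Matthes. -/
def CocycleCondition (B : J → Type*) [∀ i, CommRing (B i)] (C : J → J → Type*)
    [∀ i j, CommRing (C i j)] (π : ∀ i j, B i →+* C i j)
    (e : ∀ i j, C i j ≃+* C j i) : Prop :=
  Cocycle1 B C π e ∧ Cocycle2 B C π e

/-- The two-element extension property: every compatible pair `(b_i, b_j)` extends by
some `b_k` compatible with both. -/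
def ExtendsPairs (B : J → Type*) [∀ i, CommRing (B i)] (C : J → J → Type*)
    [∀ i j, CommRing (C i j)] (π : ∀ i j, B i →+* C i j)
    (e : ∀ i j, C i j ≃+* C j i) : Prop :=
  ∀ i j k : J, i ≠ j → i ≠ k → j ≠ k → ∀ (bi : B i) (bj : B j),
    Compat B C π e i j bi bj →
    ∃ bk : B k, Compat B C π e i k bi bk ∧ Compat B C π e j k bj bk

/-- the two-element extension property implies the cocycle identity
`φ^{ik}_j = φ^{ij}_k ∘ φ^{jk}_i` (expressed elementwise). -/
theorem stmt3 (B : J → Type*) [∀ i, CommRing (B i)]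
    (C : J → J → Type*) [∀ i j, CommRing (C i j)]
    (π : ∀ i j, B i →+* C i j) (e : ∀ i j, C i j ≃+* C j i)
    (he : ∀ i j, e j i = (e i j).symm)
    (hsurj : ∀ i j, i ≠ j → Surjective (π i j))
    (hext : ExtendsPairs B C π e) :
    Cocycle2 B C π e := by
  intro i j k hij hik hjk bi bj bk h1 h2
  obtain ⟨y, hy, hy2⟩ := (Ideal.mem_map_iff_of_surjective _ (hsurj j k hjk)).mp h1
  obtain ⟨x, hx, hx2⟩ := (Ideal.mem_map_iff_of_surjective _ (hsurj i j hij)).mp h2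
  set bi' := bi - x with hbi'
  set bj' := bj - y with hbj'
  have hcij : Compat B C π e i j bi' bj' := by
    unfold Compat
    have hyji : π j i bj' = π j i bj := by
      simp [hbj', map_sub, RingHom.mem_ker.mp hy]
    rw [hyji, hbi', map_sub, hx2]
    ring
  obtain ⟨bk', hck1, hck2⟩ := hext i j k hij hik hjk bi' bj' hcij
  -- bk' - bk ∈ ker (π k j)
  have hkerkj : bk' - bk ∈ RingHom.ker (π k j) := by
    have h3 : π j k bj' = e k j (π k j bk) := by
      rw [hbj', map_sub, hy2]; ring
    have h4 : e k j (π k j bk') = e k j (π k j bk) := by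
      rw [← hck2, h3]
    have := (e k j).injective h4
    rw [RingHom.mem_ker, map_sub, this, sub_self]
  -- extend the compatible pair (0 : B j, bk' - bk) by some bi'' in B i
  have hcjk : Compat B C π e j k (0 : B j) (bk' - bk) := by
    unfold Compat
    rw [map_zero, RingHom.mem_ker.mp hkerkj, map_zero]
  obtain ⟨bi'', hc1, hc2⟩ := hext j k i hjk hij.symm hik.symm (0 : B j) (bk' - bk) hcjk
  have hbi''ker : bi'' ∈ RingHom.ker (π i j) := by
    have : (0 : C j i) = e i j (π i j bi'') := by
      rw [← hc1]; simp [Compat]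
    exact RingHom.mem_ker.mpr ((e i j).injective (by rw [← this, map_zero]))
  have hbi''val : π i k bi'' = e k i (π k i (bk' - bk)) := by
    have : π k i (bk' - bk) = e i k (π i k bi'') := hc2
    rw [this, he i k]
    simp
  have key : π i k bi - e k i (π k i bk) = π i k bi'' := by
    have hxk : π i k bi' = π i k bi := by
      rw [hbi', map_sub, RingHom.mem_ker.mp hx, sub_zero]
    rw [hbi''val]
    have : π i k bi = e k i (π k i bk') := by rw [← hxk, hck1]
    rw [this, map_sub, map_sub]
  rw [key]
  exact Ideal.mem_map_of_mem _ hbi''ker
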